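/- Let C be a category admitting finite colimits and let X : Δ → C be a 1-Segal cosimplicial object. Then X is a unital 2-Segal cosimplicial object; that is, for every polygonal subdivision 0 ≤ i < j ≤ n the 2-Segal square of X is a pushout square in C, and for every 0 ≤ k < n the unitality square of X is a pushout square in C. -/

import Mathlib

/-!
STATEMENT 0: Let `C` be a category admitting finite colimits and `X : Δ → C` a 1-Segal
cosimplicial object.  Then `X` is unital 2-Segal: for every polygonal subdivision
`0 ≤ i < j ≤ n` the 2-Segal square of `X` is a pushout, and for every `0 ≤ k < n` the
unitality square of `X` is a pushout.

Subsets of `{0,…,n}` are identified with standard ordinals via their unique order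
isomorphisms; the corresponding inclusions/surjections are spelled out as explicit
morphisms of the simplex category below.
-/

open CategoryTheory CategoryTheory.Limits Simplicial

namespace Stmt0

/-- The inclusion `{a, a+1, …, a+m} ⊆ {0,…,n}`, as a map `[m] ⟶ [n]`, `t ↦ a + t`. -/
def interval (a m n : ℕ) (h : a + m ≤ n) : (⦋m⦌ : SimplexCategory) ⟶ ⦋n⦌ :=
  SimplexCategory.mkHom
    { toFun := fun t => ⟨a + t.1, by have := t.isLt; omega⟩
      monotone' := by
        intro s t hst
        have h2 : s.1 ≤ t.1 := hst
        simp only [Fin.mk_le_mk]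
        omega }

/-- The inclusion of the two endpoints `{0, m} ⊆ {0,…,m}`, as a map `[1] ⟶ [m]`. -/
def twoEnds (m : ℕ) : (⦋1⦌ : SimplexCategory) ⟶ ⦋m⦌ :=
  SimplexCategory.mkHom
    { toFun := fun t => ⟨if t.1 = 0 then 0 else m, by split <;> omega⟩
      monotone' := by
        intro s t hst
        have h2 : s.1 ≤ t.1 := hst
        simp only [Fin.mk_le_mk]
        split <;> split <;> omega }

/-- The inclusion `{0,…,i,j,…,n} ⊆ {0,…,n}`, as a map `[n-j+i+1] ⟶ [n]`
(identifying `{0,…,i,j,…,n}` with a standard ordinal). -/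
def gapInclusion (i j n : ℕ) (hij : i + 2 ≤ j) (hj : j ≤ n) :
    (⦋n - j + i + 1⦌ : SimplexCategory) ⟶ ⦋n⦌ :=
  SimplexCategory.mkHom
    { toFun := fun t =>
        ⟨if t.1 ≤ i then t.1 else t.1 + (j - i - 1), by have := t.isLt; split <;> omega⟩
      monotone' := by
        intro s t hst
        have h2 : s.1 ≤ t.1 := hst
        simp only [Fin.mk_le_mk]
        split <;> split <;> omega }

/-- The monotone surjection `{0,…,n} → {0,…,k,k+2,…,n}` identifying `k+1` with `k`,
as a map `[n] ⟶ [n-1]`. -/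
def collapse (k n : ℕ) (hk : k < n) : (⦋n⦌ : SimplexCategory) ⟶ ⦋n - 1⦌ :=
  SimplexCategory.mkHom
    { toFun := fun t =>
        ⟨if t.1 ≤ k then t.1 else t.1 - 1, by have := t.isLt; split <;> omega⟩
      monotone' := by
        intro s t hst
        have h2 : s.1 ≤ t.1 := hst
        simp only [Fin.mk_le_mk]
        split <;> split <;> omega }

/-- The unique map `[m] ⟶ [0]`. -/
def toPoint (m : ℕ) : (⦋m⦌ : SimplexCategory) ⟶ ⦋0⦌ :=
  SimplexCategory.mkHom ⟨fun _ => 0, monotone_const⟩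

end Stmt0

namespace Stmt0Helper
open Stmt0 CategoryTheory CategoryTheory.Limits

/-- Generalized "two sub-intervals" inclusion with flexible domain index:
`{0,…,p} ∪ {last q - p elements of [n]} ⊆ [n]`. -/
def gap (p q n : ℕ) (hpq : p ≤ q) (hqn : q ≤ n) : (⦋q⦌ : SimplexCategory) ⟶ ⦋n⦌ :=
  SimplexCategory.mkHom
    { toFun := fun t => ⟨if t.1 ≤ p then t.1 else t.1 + (n - q), by
        have := t.isLt; split <;> omega⟩
      monotone' := by
        intro s t hst
        have h2 : s.1 ≤ t.1 := hst
        simp only [Fin.mk_le_mk]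
        split <;> split <;> omega }

/-- Generalized `collapse` with flexible codomain index. -/
def merge (k n n' : ℕ) (hk : k < n) (hn : n = n' + 1) : (⦋n⦌ : SimplexCategory) ⟶ ⦋n'⦌ :=
  SimplexCategory.mkHom
    { toFun := fun t => ⟨if t.1 ≤ k then t.1 else t.1 - 1, by
        have := t.isLt; split <;> omega⟩
      monotone' := by
        intro s t hst
        have h2 : s.1 ≤ t.1 := hst
        simp only [Fin.mk_le_mk]
        split <;> split <;> omega }

lemma hom_ext0 (m : ℕ) (f g : (⦋m⦌ : SimplexCategory) ⟶ ⦋0⦌) : f = g := by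
  apply SimplexCategory.Hom.ext'
  ext t
  have h1 := (f.toOrderHom t).isLt
  have h2 := (g.toOrderHom t).isLt
  simp only [SimplexCategory.len_mk] at h1 h2
  omega

lemma interval_apply (a m n : ℕ) (h : a + m ≤ n) (t : Fin (m + 1)) :
    ((interval a m n h).toOrderHom t).1 = a + t.1 := rfl

lemma gapInclusion_apply (i j n : ℕ) (hij : i + 2 ≤ j) (hj : j ≤ n) (t : Fin (n - j + i + 1 + 1)) :
    ((gapInclusion i j n hij hj).toOrderHom t).1 =
      if t.1 ≤ i then t.1 else t.1 + (j - i - 1) := rfl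

lemma gap_apply (p q n : ℕ) (hpq : p ≤ q) (hqn : q ≤ n) (t : Fin (q + 1)) :
    ((gap p q n hpq hqn).toOrderHom t).1 = if t.1 ≤ p then t.1 else t.1 + (n - q) := rfl

lemma merge_apply (k n n' : ℕ) (hk : k < n) (hn : n = n' + 1) (t : Fin (n + 1)) :
    ((merge k n n' hk hn).toOrderHom t).1 = if t.1 ≤ k then t.1 else t.1 - 1 := rfl

section MorphismEqualities

lemma twoEnds_eq (m : ℕ) (hm : 1 ≤ m) : twoEnds m = gap 0 1 m (by omega) hm := by
  apply SimplexCategory.Hom.ext'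
  ext t
  have ht := t.isLt
  simp only [SimplexCategory.len_mk] at ht
  simp [twoEnds, gap, SimplexCategory.mkHom]
  all_goals first | omega | (split_ifs <;> omega)

lemma gapIncl_eq (i j n : ℕ) (h1 : i + 2 ≤ j) (h2 : j ≤ n) :
    gapInclusion i j n h1 h2 = gap i (n - j + i + 1) n (by omega) (by omega) := by
  apply SimplexCategory.Hom.ext'
  ext t
  have ht := t.isLt
  simp only [SimplexCategory.len_mk] at ht
  simp [gapInclusion_apply, gap_apply]
  all_goals first | omega | (split_ifs <;> omega)

lemma collapse_eq (k n : ℕ) (h : k < n) :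
    collapse k n h = merge k n (n - 1) h (by omega) := by
  apply SimplexCategory.Hom.ext'
  ext t
  have ht := t.isLt
  simp only [SimplexCategory.len_mk] at ht
  simp [collapse, merge, SimplexCategory.mkHom]

lemma interval_id (m : ℕ) (h : 0 + m ≤ m) : interval 0 m m h = 𝟙 _ := by
  apply SimplexCategory.Hom.ext'
  ext t
  simp [interval, SimplexCategory.mkHom]

lemma interval_comp (a b m' m n c : ℕ) (h' : b + m' ≤ m) (h : a + m ≤ n) (hc : a + b = c)
    (H : c + m' ≤ n) : interval b m' m h' ≫ interval a m n h = interval c m' n H := by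
  apply SimplexCategory.Hom.ext'
  ext t
  simp [interval_apply]
  omega

lemma comp_gap₀ (q n : ℕ) (h : 0 + 0 ≤ q) (h1 : 0 ≤ q) (h2 : q ≤ n) (H : 0 + 0 ≤ n) :
    interval 0 0 q h ≫ gap 0 q n h1 h2 = interval 0 0 n H := by
  apply SimplexCategory.Hom.ext'
  ext t
  have ht := t.isLt
  simp only [SimplexCategory.len_mk] at ht
  simp [interval, gap, SimplexCategory.mkHom]
  all_goals first | omega | (split_ifs <;> omega)

lemma comp_gap₁ (d : ℕ) (hd : 1 ≤ d) (h : 1 + 0 ≤ 1) (h1 : (0:ℕ) ≤ 1) (H : d + 0 ≤ d) :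
    interval 1 0 1 h ≫ gap 0 1 d h1 hd = interval d 0 d H := by
  apply SimplexCategory.Hom.ext'
  ext t
  have ht := t.isLt
  simp only [SimplexCategory.len_mk] at ht
  simp [interval, gap, SimplexCategory.mkHom]
  all_goals first | omega | (split_ifs <;> omega)

lemma comp_gap₂ (m c n : ℕ) (hc : c + m = n) (h : 1 + m ≤ m + 1) (h1 : (0:ℕ) ≤ m + 1)
    (h2 : m + 1 ≤ n) (H : c + m ≤ n) :
    interval 1 m (m + 1) h ≫ gap 0 (m + 1) n h1 h2 = interval c m n H := by
  apply SimplexCategory.Hom.ext'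
  ext t
  have ht := t.isLt
  simp only [SimplexCategory.len_mk] at ht
  simp [interval_apply, gap_apply]
  all_goals first | omega | (split_ifs <;> omega)

lemma comp_gap₃ (p M n : ℕ) (h : 0 + p ≤ M) (h1 : p ≤ M) (h2 : M ≤ n) (H : 0 + p ≤ n) :
    interval 0 p M h ≫ gap p M n h1 h2 = interval 0 p n H := by
  apply SimplexCategory.Hom.ext'
  ext t
  have ht := t.isLt
  simp only [SimplexCategory.len_mk] at ht
  simp [interval_apply, gap_apply]
  all_goals first | omega | (split_ifs <;> omega)

lemma gap_sq₁ (d m n : ℕ) (hd : 1 ≤ d) (hn : d + m = n) (h : 0 + 1 ≤ m + 1)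
    (h1 : (0:ℕ) ≤ m + 1) (h2 : m + 1 ≤ n) (h3 : (0:ℕ) ≤ 1) (h4 : 0 + d ≤ n) :
    interval 0 1 (m + 1) h ≫ gap 0 (m + 1) n h1 h2 = gap 0 1 d h3 hd ≫ interval 0 d n h4 := by
  apply SimplexCategory.Hom.ext'
  ext t
  have ht := t.isLt
  simp only [SimplexCategory.len_mk] at ht
  simp [interval, gap, SimplexCategory.mkHom]
  all_goals first | omega | (split_ifs <;> omega)

lemma gap_sq₂ (i d e : ℕ) (hd : 1 ≤ d) (h : i + (e + 1) ≤ e + i + 1)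
    (h1 : i ≤ e + i + 1) (h2 : e + i + 1 ≤ i + d + e) (h3 : (0:ℕ) ≤ e + 1)
    (h4 : e + 1 ≤ d + e) (h5 : i + (d + e) ≤ i + d + e) :
    interval i (e + 1) (e + i + 1) h ≫ gap i (e + i + 1) (i + d + e) h1 h2 =
      gap 0 (e + 1) (d + e) h3 h4 ≫ interval i (d + e) (i + d + e) h5 := by
  apply SimplexCategory.Hom.ext'
  ext t
  have ht := t.isLt
  simp only [SimplexCategory.len_mk] at ht
  simp [interval_apply, gap_apply]
  all_goals first | omega | (split_ifs <;> omega)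

lemma comp_merge₀ (m : ℕ) (h : 0 + 0 ≤ m + 1) (h1 : 0 < m + 1) (h2 : m + 1 = m + 1)
    (H : 0 + 0 ≤ m) :
    interval 0 0 (m + 1) h ≫ merge 0 (m + 1) m h1 h2 = interval 0 0 m H := by
  apply SimplexCategory.Hom.ext'
  ext t
  have ht := t.isLt
  simp only [SimplexCategory.len_mk] at ht
  simp [interval, merge, SimplexCategory.mkHom]

lemma comp_merge₁ (m : ℕ) (h : 1 + m ≤ m + 1) (h1 : 0 < m + 1) (h2 : m + 1 = m + 1) :
    interval 1 m (m + 1) h ≫ merge 0 (m + 1) m h1 h2 = 𝟙 _ := by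
  apply SimplexCategory.Hom.ext'
  ext t
  have ht := t.isLt
  simp only [SimplexCategory.len_mk] at ht
  simp [interval_apply, merge_apply]

lemma comp_merge₂ (k m : ℕ) (h : 0 + k ≤ k + m + 1) (h1 : k < k + m + 1)
    (h2 : k + m + 1 = k + m + 1) (H : 0 + k ≤ k + m) :
    interval 0 k (k + m + 1) h ≫ merge k (k + m + 1) (k + m) h1 h2 = interval 0 k (k + m) H := by
  apply SimplexCategory.Hom.ext'
  ext t
  have ht := t.isLt
  simp only [SimplexCategory.len_mk] at ht
  simp [interval_apply, merge_apply]
  all_goals first | omega | (split_ifs <;> omega)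

lemma merge_sq₁ (m : ℕ) (h : 0 + 1 ≤ m + 1) (h1 : 0 < m + 1) (h2 : m + 1 = m + 1)
    (H : 0 + 0 ≤ m) :
    interval 0 1 (m + 1) h ≫ merge 0 (m + 1) m h1 h2 = toPoint 1 ≫ interval 0 0 m H := by
  apply SimplexCategory.Hom.ext'
  ext t
  have ht := t.isLt
  simp only [SimplexCategory.len_mk] at ht
  simp [interval, merge, toPoint, SimplexCategory.mkHom]
  all_goals first | omega | (split_ifs <;> omega)

lemma merge_sq₂ (k e : ℕ) (h : k + (e + 1) ≤ k + e + 1) (h1 : k < k + e + 1)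
    (h2 : k + e + 1 = k + e + 1) (h3 : 0 < e + 1) (h4 : e + 1 = e + 1)
    (H : k + e ≤ k + e) :
    interval k (e + 1) (k + e + 1) h ≫ merge k (k + e + 1) (k + e) h1 h2 =
      merge 0 (e + 1) e h3 h4 ≫ interval k e (k + e) H := by
  apply SimplexCategory.Hom.ext'
  ext t
  have ht := t.isLt
  simp only [SimplexCategory.len_mk] at ht
  simp [interval_apply, merge_apply]
  split_ifs with h0
  · rfl
  · have h5 : t.1 ≠ 0 := fun h6 => h0 (Fin.ext h6)
    omega

lemma merge_eq_toPoint (h1 : (0:ℕ) < 1) (h2 : (1:ℕ) = 0 + 1) : merge 0 1 0 h1 h2 = toPoint 1 :=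
  hom_ext0 _ _ _

lemma comp_toPoint (h : 1 + 0 ≤ 1) : interval 1 0 1 h ≫ toPoint 1 = 𝟙 _ :=
  hom_ext0 _ _ _

end MorphismEqualities

section Pushouts

variable {C : Type*} [CategoryTheory.Category C] (X : SimplexCategory ⥤ C)

/-- The 1-Segal hypothesis. -/
abbrev Seg1 : Prop :=
  ∀ (n k : ℕ) (_ : 0 < k) (_ : k < n),
      IsPushout
        (X.map (interval 0 0 (n - k) (by have := X; omega)))
        (X.map (interval k 0 k (by have := X; omega)))
        (X.map (interval k (n - k) n (by have := X; omega)))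
        (X.map (interval 0 k n (by have := X; omega)))

variable {X}

/-- Additive reformulation of the 1-Segal squares. -/
lemma seg (hX : Seg1 X) (k e n : ℕ) (h0 : 0 < k) (hkn : k < n) (he : n - k = e) :
    IsPushout
      (X.map (interval 0 0 e (by omega)))
      (X.map (interval k 0 k (by omega)))
      (X.map (interval k e n (by omega)))
      (X.map (interval 0 k n (by omega))) := by
  subst he
  exact hX n k h0 hkn

/-- The basic 2-Segal square with `i = 0`. -/
lemma L0 (hX : Seg1 X) (d e n : ℕ) (hd : 2 ≤ d) (hn : d + e = n) :
    IsPushout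
      (X.map (gap 0 1 d (by omega) (by omega)))
      (X.map (interval 0 1 (e + 1) (by omega)))
      (X.map (interval 0 d n (by omega)))
      (X.map (gap 0 (e + 1) n (by omega) (by omega))) := by
  subst hn
  obtain _ | e := e
  · show IsPushout
      (X.map (gap 0 1 d (by omega) (by omega)))
      (X.map (interval 0 1 1 (by omega)))
      (X.map (interval 0 d d (by omega)))
      (X.map (gap 0 1 d (by omega) (by omega)))
    rw [interval_id, interval_id, X.map_id, X.map_id]
    exact IsPushout.of_id_snd
  · have t := seg hX 1 (e + 1) (e + 1 + 1) (by omega) (by omega) (by omega)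
    have core := seg hX d (e + 1) (d + (e + 1)) (by omega) (by omega) (by omega)
    have s : IsPushout
        (X.map (interval 0 0 (e + 1) (by omega)))
        (X.map (interval 1 0 1 (by omega)) ≫ X.map (gap 0 1 d (by omega) (by omega)))
        (X.map (interval 1 (e + 1) (e + 1 + 1) (by omega)) ≫
          X.map (gap 0 (e + 1 + 1) (d + (e + 1)) (by omega) (by omega)))
        (X.map (interval 0 d (d + (e + 1)) (by omega))) := by
      rw [← X.map_comp, ← X.map_comp, comp_gap₁ d (by omega),
        comp_gap₂ (e + 1) d (d + (e + 1)) (by omega)]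
      exact core
    have p : X.map (interval 0 1 (e + 1 + 1) (by omega)) ≫
          X.map (gap 0 (e + 1 + 1) (d + (e + 1)) (by omega) (by omega)) =
        X.map (gap 0 1 d (by omega) (by omega)) ≫
          X.map (interval 0 d (d + (e + 1)) (by omega)) := by
      rw [← X.map_comp, ← X.map_comp, gap_sq₁ d (e + 1) (d + (e + 1)) (by omega) (by omega)]
    exact (IsPushout.of_top s p t).flip

/-- The pushout square comparing `{0,…,i} ∪ {i + rest}`-shaped inclusions. -/
lemma Vlem (hX : Seg1 X) (i d e : ℕ) (hi : 0 < i) (hd : 2 ≤ d) :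
    IsPushout
      (X.map (gap 0 (e + 1) (d + e) (by omega) (by omega)))
      (X.map (interval i (e + 1) (e + i + 1) (by omega)))
      (X.map (interval i (d + e) (i + d + e) (by omega)))
      (X.map (gap i (e + i + 1) (i + d + e) (by omega) (by omega))) := by
  have t := (seg hX i (e + 1) (e + i + 1) hi (by omega) (by omega)).flip
  have core := (seg hX i (d + e) (i + d + e) hi (by omega) (by omega)).flip
  have s : IsPushout
      (X.map (interval i 0 i (by omega)))
      (X.map (interval 0 0 (e + 1) (by omega)) ≫
        X.map (gap 0 (e + 1) (d + e) (by omega) (by omega)))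
      (X.map (interval 0 i (e + i + 1) (by omega)) ≫
        X.map (gap i (e + i + 1) (i + d + e) (by omega) (by omega)))
      (X.map (interval i (d + e) (i + d + e) (by omega))) := by
    rw [← X.map_comp, ← X.map_comp, comp_gap₀, comp_gap₃]
    exact core
  have p : X.map (interval i (e + 1) (e + i + 1) (by omega)) ≫
        X.map (gap i (e + i + 1) (i + d + e) (by omega) (by omega)) =
      X.map (gap 0 (e + 1) (d + e) (by omega) (by omega)) ≫
        X.map (interval i (d + e) (i + d + e) (by omega)) := by
    rw [← X.map_comp, ← X.map_comp, gap_sq₂ i d e (by omega)]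
  exact (IsPushout.of_top s p t).flip

/-- The general 2-Segal square, additively indexed. -/
lemma main2 (hX : Seg1 X) (i d e n : ℕ) (hd : 2 ≤ d) (hn : i + d + e = n) :
    IsPushout
      (X.map (gap 0 1 d (by omega) (by omega)))
      (X.map (interval i 1 (e + i + 1) (by omega)))
      (X.map (interval i d n (by omega)))
      (X.map (gap i (e + i + 1) n (by omega) (by omega))) := by
  rcases Nat.eq_zero_or_pos i with rfl | hi
  · exact L0 hX d e n hd (by omega)
  · subst hn
    have P := (L0 hX d e (d + e) hd rfl).paste_vert (Vlem hX i d e hi hd)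
    rw [show (interval i 1 (e + i + 1) (by omega) : _ ⟶ _) =
          interval 0 1 (e + 1) (by omega) ≫ interval i (e + 1) (e + i + 1) (by omega) from
        (interval_comp i 0 1 (e + 1) (e + i + 1) i (by omega) (by omega) (by omega)
          (by omega)).symm,
      show (interval i d (i + d + e) (by omega) : _ ⟶ _) =
          interval 0 d (d + e) (by omega) ≫ interval i (d + e) (i + d + e) (by omega) from
        (interval_comp i 0 d (d + e) (i + d + e) i (by omega) (by omega) (by omega)
          (by omega)).symm,
      X.map_comp, X.map_comp]
    exact P

/-- The unitality square for `k = 0`. -/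
lemma U0 (hX : Seg1 X) (e n n' : ℕ) (hn : e + 1 = n) (hn' : e = n') :
    IsPushout
      (X.map (interval 0 1 n (by omega)))
      (X.map (toPoint 1))
      (X.map (merge 0 n n' (by omega) (by omega)))
      (X.map (interval 0 0 n' (by omega))) := by
  subst hn hn'
  obtain _ | e := e
  · show IsPushout
      (X.map (interval 0 1 1 (by omega)))
      (X.map (toPoint 1))
      (X.map (merge 0 1 0 (by omega) (by omega)))
      (X.map (interval 0 0 0 (by omega)))
    rw [interval_id, interval_id, merge_eq_toPoint, X.map_id, X.map_id]
    exact IsPushout.of_horiz_isIso ⟨by simp⟩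
  · have t := seg hX 1 (e + 1) (e + 1 + 1) (by omega) (by omega) (by omega)
    have s : IsPushout
        (X.map (interval 0 0 (e + 1) (by omega)))
        (X.map (interval 1 0 1 (by omega)) ≫ X.map (toPoint 1))
        (X.map (interval 1 (e + 1) (e + 1 + 1) (by omega)) ≫
          X.map (merge 0 (e + 1 + 1) (e + 1) (by omega) (by omega)))
        (X.map (interval 0 0 (e + 1) (by omega))) := by
      rw [← X.map_comp, ← X.map_comp, comp_toPoint, comp_merge₁, X.map_id, X.map_id]
      exact IsPushout.of_id_snd
    have p : X.map (interval 0 1 (e + 1 + 1) (by omega)) ≫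
          X.map (merge 0 (e + 1 + 1) (e + 1) (by omega) (by omega)) =
        X.map (toPoint 1) ≫ X.map (interval 0 0 (e + 1) (by omega)) := by
      rw [← X.map_comp, ← X.map_comp, merge_sq₁]
    exact IsPushout.of_top s p t

/-- The square pushing a unitality square from `{k,…,n}` into `{0,…,n}`. -/
lemma V3lem (hX : Seg1 X) (k e n n' : ℕ) (hk : 0 < k) (hn : k + e + 1 = n)
    (hn' : k + e = n') :
    IsPushout
      (X.map (interval k (e + 1) n (by omega)))
      (X.map (merge 0 (e + 1) e (by omega) (by omega)))
      (X.map (merge k n n' (by omega) (by omega)))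
      (X.map (interval k e n' (by omega))) := by
  subst hn hn'
  have t := (seg hX k (e + 1) (k + e + 1) hk (by omega) (by omega)).flip
  have core : IsPushout
      (X.map (interval k 0 k (by omega)))
      (X.map (interval 0 0 e (by omega)))
      (X.map (interval 0 k (k + e) (by omega)))
      (X.map (interval k e (k + e) (by omega))) := by
    obtain _ | e := e
    · show IsPushout
        (X.map (interval k 0 k (by omega)))
        (X.map (interval 0 0 0 (by omega)))
        (X.map (interval 0 k k (by omega)))
        (X.map (interval k 0 k (by omega)))
      rw [interval_id, interval_id, X.map_id, X.map_id]
      exact IsPushout.of_id_snd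
    · exact (seg hX k (e + 1) (k + (e + 1)) hk (by omega) (by omega)).flip
  have s : IsPushout
      (X.map (interval k 0 k (by omega)))
      (X.map (interval 0 0 (e + 1) (by omega)) ≫
        X.map (merge 0 (e + 1) e (by omega) (by omega)))
      (X.map (interval 0 k (k + e + 1) (by omega)) ≫
        X.map (merge k (k + e + 1) (k + e) (by omega) (by omega)))
      (X.map (interval k e (k + e) (by omega))) := by
    rw [← X.map_comp, ← X.map_comp, comp_merge₀, comp_merge₂]
    exact core
  have p : X.map (interval k (e + 1) (k + e + 1) (by omega)) ≫
        X.map (merge k (k + e + 1) (k + e) (by omega) (by omega)) =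
      X.map (merge 0 (e + 1) e (by omega) (by omega)) ≫
        X.map (interval k e (k + e) (by omega)) := by
    rw [← X.map_comp, ← X.map_comp, merge_sq₂]
  exact IsPushout.of_top s p t

/-- The general unitality square, additively indexed. -/
lemma mainU (hX : Seg1 X) (k e n n' : ℕ) (hn : k + e + 1 = n) (hn' : k + e = n') :
    IsPushout
      (X.map (interval k 1 n (by omega)))
      (X.map (toPoint 1))
      (X.map (merge k n n' (by omega) (by omega)))
      (X.map (interval k 0 n' (by omega))) := by
  rcases Nat.eq_zero_or_pos k with rfl | hk
  · exact U0 hX e n n' (by omega) (by omega)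
  · subst hn hn'
    have P := (U0 hX e (e + 1) e rfl rfl).paste_horiz
      (V3lem hX k e (k + e + 1) (k + e) hk rfl rfl)
    rw [show (interval k 1 (k + e + 1) (by omega) : _ ⟶ _) =
          interval 0 1 (e + 1) (by omega) ≫ interval k (e + 1) (k + e + 1) (by omega) from
        (interval_comp k 0 1 (e + 1) (k + e + 1) k (by omega) (by omega) (by omega)
          (by omega)).symm,
      show (interval k 0 (k + e) (by omega) : _ ⟶ _) =
          interval 0 0 e (by omega) ≫ interval k e (k + e) (by omega) from
        (interval_comp k 0 0 e (k + e) k (by omega) (by omega) (by omega) (by omega)).symm,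
      X.map_comp, X.map_comp]
    exact P

end Pushouts

end Stmt0Helper

open Stmt0 in
theorem stmt_0 {C : Type*} [Category C] [HasFiniteColimits C]
    (X : SimplexCategory ⥤ C)
    -- X is 1-Segal: for 0 < k < n the square
    --   X({k}) → X({k,…,n}), X({k}) → X({0,…,k}), both mapping to X({0,…,n})
    -- is a pushout.
    (h1Segal : ∀ (n k : ℕ) (_ : 0 < k) (_ : k < n),
      IsPushout
        (X.map (interval 0 0 (n - k) (by omega)))       -- {k} ↪ {k,…,n}
        (X.map (interval k 0 k (by omega)))             -- {k} ↪ {0,…,k}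
        (X.map (interval k (n - k) n (by omega)))       -- {k,…,n} ↪ {0,…,n}
        (X.map (interval 0 k n (by omega)))) :          -- {0,…,k} ↪ {0,…,n}
    -- X is 2-Segal: for every polygonal subdivision 0 ≤ i < j ≤ n the square
    --   X({i,j}) → X({i,…,j}), X({i,j}) → X({0,…,i,j,…,n}), both mapping to X({0,…,n})
    -- is a pushout;
    (∀ (n i j : ℕ) (_ : 3 ≤ n) (_ : i + 2 ≤ j) (_ : j ≤ n) (_ : ¬(i = 0 ∧ j = n)),
      IsPushout
        (X.map (twoEnds (j - i)))                              -- {i,j} ↪ {i,…,j}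
        (X.map (interval i 1 (n - j + i + 1) (by omega)))      -- {i,j} ↪ {0,…,i,j,…,n}
        (X.map (interval i (j - i) n (by omega)))              -- {i,…,j} ↪ {0,…,n}
        (X.map (gapInclusion i j n (by omega) (by omega))))    -- {0,…,i,j,…,n} ↪ {0,…,n}
    ∧
    -- and X is unital: for every 0 ≤ k < n the unitality square
    --   X({k,k+1}) → X({0,…,n}), X({k,k+1}) → X({k}),
    --   X({0,…,n}) → X({0,…,k,k+2,…,n}), X({k}) → X({0,…,k,k+2,…,n})
    -- is a pushout.
    (∀ (n k : ℕ) (_ : k < n),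
      IsPushout
        (X.map (interval k 1 n (by omega)))         -- {k,k+1} ↪ {0,…,n}
        (X.map (toPoint 1))                         -- {k,k+1} → {k}
        (X.map (collapse k n (by omega)))           -- {0,…,n} → {0,…,k,k+2,…,n}
        (X.map (interval k 0 (n - 1) (by omega)))) := by  -- {k} ↪ {0,…,k,k+2,…,n}

  constructor
  · intro n i j _h3 hij hjn _hne
    rw [Stmt0Helper.twoEnds_eq (j - i) (by omega), Stmt0Helper.gapIncl_eq]
    exact Stmt0Helper.main2 h1Segal i (j - i) (n - j) n (by omega) (by omega)
  · intro n k hkn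
    rw [Stmt0Helper.collapse_eq]
    exact Stmt0Helper.mainU h1Segal k (n - k - 1) n (n - 1) (by omega) (by omega)
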